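/- For a strongly connected finite directed graph on n ≥ 2 vertices, for every vertex v and every d ≥ 0, the closeness centrality c(v) = (n−1)/f(v) satisfies c(v) ≤ (n−1)/(f_d(v) − γ̃_{d+1}(v) + (d+2)·(n − n_d(v))), provided the denominator is positive, where f_d(v) is the farness restricted to distance ≤ d, γ̃_{d+1}(v) = Σ_{u : dist(v,u)=d} outdeg(u), and n_d(v) is the number of vertices at distance ≤ d from v. -/

import Mathlib

open Finset

variable {V : Type*}

/-- `steps r n v w` : there is a walk of length `n` from `v` to `w` along relation `r`. -/
def steps (r : V → V → Prop) : ℕ → V → V → Prop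
  | 0, v, w => v = w
  | n+1, v, w => ∃ u, r v u ∧ steps r n u w

/-- `w` is reachable from `v`. -/
def reach (r : V → V → Prop) (v w : V) : Prop := ∃ n, steps r n v w

/-- shortest-path distance (number of edges). -/
noncomputable def ddist (r : V → V → Prop) (v w : V) : ℕ := sInf {n | steps r n v w}

open scoped Classical in
/-- set of vertices reachable from `v`. -/
noncomputable def Rset (r : V → V → Prop) [Fintype V] (v : V) : Finset V :=
  univ.filter (fun w => reach r v w)

/-- number of vertices reachable from `v`. -/
noncomputable def rnum (r : V → V → Prop) [Fintype V] (v : V) : ℕ := (Rset r v).card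

/-- farness of `v`. -/
noncomputable def farn (r : V → V → Prop) [Fintype V] (v : V) : ℕ :=
  ∑ w ∈ Rset r v, ddist r v w

open scoped Classical in
/-- ball of radius `d` around `v`. -/
noncomputable def ball (r : V → V → Prop) [Fintype V] (v : V) (d : ℕ) : Finset V :=
  univ.filter (fun w => reach r v w ∧ ddist r v w ≤ d)

/-- number of vertices at distance at most `d` from `v`. -/
noncomputable def nball (r : V → V → Prop) [Fintype V] (v : V) (d : ℕ) : ℕ := (ball r v d).card

open scoped Classical in
/-- set of vertices at distance exactly `d` from `v`. -/
noncomputable def sphere (r : V → V → Prop) [Fintype V] (v : V) (d : ℕ) : Finset V :=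
  univ.filter (fun w => reach r v w ∧ ddist r v w = d)

/-- number of vertices at distance exactly `d` from `v`. -/
noncomputable def gam (r : V → V → Prop) [Fintype V] (v : V) (d : ℕ) : ℕ := (sphere r v d).card

/-- farness of `v` restricted to distance at most `d`. -/
noncomputable def fd (r : V → V → Prop) [Fintype V] (v : V) (d : ℕ) : ℕ :=
  ∑ w ∈ ball r v d, ddist r v w

open scoped Classical in
/-- out-degree of `u`. -/
noncomputable def outdeg (r : V → V → Prop) [Fintype V] (u : V) : ℕ :=
  (univ.filter (fun w => r u w)).card

/-- `gtil r v d` = upper bound γ̃_{d+1}(v) = Σ_{u : dist(v,u)=d} outdeg(u). -/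
noncomputable def gtil (r : V → V → Prop) [Fintype V] (v : V) (d : ℕ) : ℕ :=
  ∑ u ∈ sphere r v d, outdeg r u

lemma steps_succ_back (r : V → V → Prop) :
    ∀ n (v w : V), steps r (n + 1) v w ↔ ∃ u, steps r n v u ∧ r u w := by
  intro n
  induction n with
  | zero =>
    intro v w
    constructor
    · rintro ⟨u, h1, h2⟩; exact ⟨v, rfl, h2 ▸ h1⟩
    · rintro ⟨u, h1, h2⟩; exact ⟨w, h1 ▸ h2, rfl⟩
  | succ n ih =>
    intro v w
    constructor
    · rintro ⟨a, hva, ha⟩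
      obtain ⟨u, h1, h2⟩ := (ih a w).mp ha
      exact ⟨u, ⟨a, hva, h1⟩, h2⟩
    · rintro ⟨u, ⟨a, hva, h1⟩, h2⟩
      exact ⟨a, hva, (ih a w).mpr ⟨u, h1, h2⟩⟩

lemma steps_ddist {r : V → V → Prop} {v w : V} (h : reach r v w) :
    steps r (ddist r v w) v w :=
  Nat.sInf_mem h

lemma ddist_le {r : V → V → Prop} {v w : V} {n : ℕ} (h : steps r n v w) :
    ddist r v w ≤ n :=
  Nat.sInf_le h

open scoped Classical in
lemma gam_succ_le_gtil (r : V → V → Prop) [Fintype V] (v : V) (d : ℕ) :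
    gam r v (d + 1) ≤ gtil r v d := by
  classical
  have hsub : sphere r v (d + 1) ⊆
      (sphere r v d).biUnion (fun u => univ.filter (fun w => r u w)) := by
    intro w hw
    simp only [sphere, mem_filter, mem_univ, true_and] at hw
    obtain ⟨hreach, hdist⟩ := hw
    have hs : steps r (d + 1) v w := by
      have := steps_ddist hreach; rwa [hdist] at this
    obtain ⟨u, hsu, hrw⟩ := (steps_succ_back r d v w).mp hs
    have hru : reach r v u := ⟨d, hsu⟩
    have hud : ddist r v u = d := by
      have hle : ddist r v u ≤ d := ddist_le hsu
      have hge : d ≤ ddist r v u := by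
        by_contra hlt
        push_neg at hlt
        have : steps r (ddist r v u + 1) v w :=
          (steps_succ_back r _ v w).mpr ⟨u, steps_ddist hru, hrw⟩
        have h2 : ddist r v w ≤ ddist r v u + 1 := ddist_le this
        omega
      omega
    refine mem_biUnion.mpr ⟨u, ?_, ?_⟩
    · simp [sphere, hru, hud]
    · simp [hrw]
  calc gam r v (d + 1) ≤ ((sphere r v d).biUnion
        (fun u => univ.filter (fun w => r u w))).card := card_le_card hsub
    _ ≤ ∑ u ∈ sphere r v d, (univ.filter (fun w => r u w)).card :=
        card_biUnion_le
    _ = gtil r v d := rfl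

open scoped Classical in
lemma farn_key (r : V → V → Prop) [Fintype V]
    (hsc : ∀ v w : V, reach r v w) (v : V) (d : ℕ) :
    fd r v d + (d + 2) * (Fintype.card V - nball r v d)
      ≤ farn r v + gam r v (d + 1) := by
  classical
  set P : V → Prop := fun w => reach r v w ∧ ddist r v w ≤ d with hP
  have hRset : Rset r v = univ := by
    ext w; simp [Rset, hsc v w]
  have hfarn : farn r v = ∑ w ∈ univ.filter P, ddist r v w
      + ∑ w ∈ univ.filter (fun w => ¬ P w), ddist r v w := by
    rw [farn, hRset, sum_filter_add_sum_filter_not]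
  have hfd : fd r v d = ∑ w ∈ univ.filter P, ddist r v w := rfl
  set S := univ.filter (fun w => ¬ P w) with hS
  -- card S = card V - nball
  have hcardS : nball r v d + S.card = Fintype.card V := by
    have h := card_filter_add_card_filter_not (s := (univ : Finset V)) (p := P)
    rw [card_univ] at h
    have e1 : ball r v d = univ.filter P := by
      ext w; simp [ball, hP]
    rw [nball, e1, hS]
    exact h
  -- split S by ddist = d+1
  have hsphere : S.filter (fun w => ddist r v w = d + 1) = sphere r v (d + 1) := by
    ext w
    simp only [hS, mem_filter, mem_univ, true_and, sphere, hP]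
    constructor
    · rintro ⟨h1, h2⟩; exact ⟨hsc v w, h2⟩
    · rintro ⟨h1, h2⟩; exact ⟨fun h => by omega, h2⟩
  have hsplit : gam r v (d + 1) + (S.filter (fun w => ¬ ddist r v w = d + 1)).card
      = S.card := by
    have := card_filter_add_card_filter_not (s := S)
      (p := fun w => ddist r v w = d + 1)
    rw [hsphere] at this
    exact this
  have hbound : (d + 1) * gam r v (d + 1)
      + (d + 2) * (S.filter (fun w => ¬ ddist r v w = d + 1)).card
      ≤ ∑ w ∈ S, ddist r v w := by
    rw [gam, ← hsphere, ← sum_filter_add_sum_filter_not S (fun w => ddist r v w = d + 1)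
      (fun w => ddist r v w)]
    have h1 : (d + 1) * (S.filter (fun w => ddist r v w = d + 1)).card
        ≤ ∑ w ∈ S.filter (fun w => ddist r v w = d + 1), ddist r v w := by
      rw [mul_comm, ← smul_eq_mul, ← sum_const]
      apply sum_le_sum
      intro w hw
      simp only [mem_filter] at hw
      omega
    have h2 : (d + 2) * (S.filter (fun w => ¬ ddist r v w = d + 1)).card
        ≤ ∑ w ∈ S.filter (fun w => ¬ ddist r v w = d + 1), ddist r v w := by
      rw [mul_comm, ← smul_eq_mul, ← sum_const]
      apply sum_le_sum
      intro w hw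
      simp only [mem_filter, hS, hP, mem_univ, true_and, not_and, not_le] at hw
      have hd : d < ddist r v w := hw.1 (hsc v w)
      omega
    exact Nat.add_le_add h1 h2
  have hmul : (d + 2) * S.card = (d + 1) * gam r v (d + 1)
      + (d + 2) * (S.filter (fun w => ¬ ddist r v w = d + 1)).card
      + gam r v (d + 1) := by
    rw [← hsplit]; ring
  have hmain : fd r v d + (d + 2) * S.card ≤ farn r v + gam r v (d + 1) := by
    rw [hfarn, hfd]
    omega
  have hSc : S.card = Fintype.card V - nball r v d := by omega
  rw [← hSc]
  exact hmain

theorem closeness_upper_bound_strongly_connected [Fintype V] (r : V → V → Prop)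
    (hsc : ∀ v w : V, reach r v w) (hn : 2 ≤ Fintype.card V) (v : V) (d : ℕ)
    (hpos : 0 < (fd r v d : ℝ) - (gtil r v d : ℝ)
        + (d + 2) * ((Fintype.card V : ℝ) - (nball r v d : ℝ))) :
    ((Fintype.card V : ℝ) - 1) / (farn r v : ℝ) ≤
      ((Fintype.card V : ℝ) - 1) /
        ((fd r v d : ℝ) - (gtil r v d : ℝ)
          + (d + 2) * ((Fintype.card V : ℝ) - (nball r v d : ℝ))) := by
  classical
  set D : ℝ := (fd r v d : ℝ) - (gtil r v d : ℝ)
      + (d + 2) * ((Fintype.card V : ℝ) - (nball r v d : ℝ)) with hD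
  have hnb : nball r v d ≤ Fintype.card V := by
    apply card_le_card; intro w _; exact mem_univ w
  have hkey := farn_key r hsc v d
  have hgg := gam_succ_le_gtil r v d
  have hcast : (fd r v d : ℝ) + (d + 2) * ((Fintype.card V : ℝ) - (nball r v d : ℝ))
      ≤ (farn r v : ℝ) + (gam r v (d + 1) : ℝ) := by
    have : ((fd r v d + (d + 2) * (Fintype.card V - nball r v d) : ℕ) : ℝ)
        ≤ ((farn r v + gam r v (d + 1) : ℕ) : ℝ) := by exact_mod_cast hkey
    push_cast [Nat.cast_sub hnb] at this
    linarith
  have hDle : D ≤ (farn r v : ℝ) := by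
    have : (gam r v (d + 1) : ℝ) ≤ (gtil r v d : ℝ) := by exact_mod_cast hgg
    rw [hD]; linarith
  have hnn : (0 : ℝ) ≤ (Fintype.card V : ℝ) - 1 := by
    have : (2 : ℝ) ≤ (Fintype.card V : ℝ) := by exact_mod_cast hn
    linarith
  exact div_le_div_of_nonneg_left hnn hpos hDle
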